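/- If a graph G is 3-connected, v is a vertex of G of degree at least 4, and G' is obtained from G by splitting v (i.e., replacing v by two adjacent vertices v1, v2 whose neighborhoods partition the neighborhood of v into two parts each of size at least 2), then G' is 3-connected. -/

import Mathlib

open SimpleGraph

universe u v

/-! ### Basic connectivity notions -/

/-- A graph is 3-connected: at least 4 vertices and deleting any ≤ 2 vertices
leaves a connected graph. -/
def ThreeConnected {V : Type u} (G : SimpleGraph V) : Prop :=
  4 ≤ Nat.card V ∧
    ∀ s : Set V, s.ncard ≤ 2 → ((⊤ : G.Subgraph).deleteVerts s).coe.Connected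

/-- A separation of `G`: `A ∪ B = V(G)` and no edge between `A \ B` and `B \ A`. -/
def Separation {V : Type u} (G : SimpleGraph V) (A B : Set V) : Prop :=
  A ∪ B = Set.univ ∧ ∀ a ∈ A \ B, ∀ b ∈ B \ A, ¬ G.Adj a b

/-- The edges of `G` induced by a vertex set `A`. -/
def inducedEdges {V : Type u} (G : SimpleGraph V) (A : Set V) : Set (Sym2 V) :=
  {e ∈ G.edgeSet | ∀ x ∈ e, x ∈ A}

/-- Weakly 4-connected: 3-connected, at least 5 vertices, and every separation of order
at most three has a side inducing at most 4 edges. -/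
def WeaklyFourConnected {V : Type u} (G : SimpleGraph V) : Prop :=
  ThreeConnected G ∧ 5 ≤ Nat.card V ∧
    ∀ A B : Set V, Separation G A B → (A ∩ B).ncard ≤ 3 →
      (inducedEdges G A).ncard ≤ 4 ∨ (inducedEdges G B).ncard ≤ 4

/-! ### Vertex splitting and expansions -/

/-- Valid data for splitting vertex `v`: `N1, N2` partition the neighborhood of `v`
with each part of size at least 2. -/
def IsValidSplitData {V : Type u} (G : SimpleGraph V) (v : V) (N1 N2 : Set V) : Prop :=
  N1 ∪ N2 = G.neighborSet v ∧ Disjoint N1 N2 ∧ 2 ≤ N1.ncard ∧ 2 ≤ N2.ncard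

/-- The graph obtained by splitting vertex `v` according to the partition `N1, N2`.
The vertex `some v` plays the role of `v₁` and `none` plays the role of `v₂`;
vertices `some a` for `a ≠ v` are the old vertices. -/
def splitGraph {V : Type u} (G : SimpleGraph V) (v : V) (N1 N2 : Set V) :
    SimpleGraph (Option V) :=
  SimpleGraph.fromRel (fun x y =>
    (∃ a b, x = some a ∧ y = some b ∧ a ≠ v ∧ b ≠ v ∧ G.Adj a b) ∨
    (x = some v ∧ ∃ b ∈ N1, y = some b) ∨
    (x = none ∧ ∃ b ∈ N2, y = some b) ∨
    (x = none ∧ y = some v))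

/-- `IsExpansion G G' π newE`: `G'` is obtained from `G` by repeatedly splitting
vertices of degree at least four; `π` maps each vertex of `G'` to the vertex of `G`
it arose from (so the branch-sets are the fibres of `π`) and `newE` is the set of
new edges created by the splits. -/
inductive IsExpansion {V : Type u} (G : SimpleGraph V) :
    {W : Type u} → SimpleGraph W → (W → V) → Set (Sym2 W) → Prop
  | refl : IsExpansion G G id ∅
  | step {W : Type u} {G' : SimpleGraph W} {π : W → V} {newE : Set (Sym2 W)}
      (h : IsExpansion G G' π newE) (v : W) (N1 N2 : Set W)
      (hs : IsValidSplitData G' v N1 N2) :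
      IsExpansion G (splitGraph G' v N1 N2) (fun w => π (w.getD v))
        (Sym2.map some '' newE ∪ {s(some v, none)})

/-! ### Minors -/

/-- `G` is isomorphic to a minor of `H`: there are disjoint nonempty connected
branch sets in `H`, one for each vertex of `G`, with edges of `G` realized by
edges of `H` between the corresponding branch sets. -/
def IsMinorOf {V : Type u} {W : Type v} (G : SimpleGraph V) (H : SimpleGraph W) : Prop :=
  ∃ f : V → Set W,
    (∀ a, (f a).Nonempty) ∧
    (∀ a, (H.induce (f a)).Connected) ∧
    (∀ a b, a ≠ b → Disjoint (f a) (f b)) ∧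
    (∀ a b, G.Adj a b → ∃ x ∈ f a, ∃ y ∈ f b, H.Adj x y)

/-! ### Cycles, segments, disk systems -/

/-- A subgraph is a cycle: nonempty, connected, and every vertex has exactly
two neighbours in it. -/
def IsCycleSub {V : Type u} {G : SimpleGraph V} (C : G.Subgraph) : Prop :=
  C.verts.Nonempty ∧ C.Connected ∧ ∀ w ∈ C.verts, (C.neighborSet w).ncard = 2

/-- A subgraph is a path: nonempty, connected, maximum degree at most two, and
some vertex of degree at most one. -/
def IsPathSub {V : Type u} {G : SimpleGraph V} (P : G.Subgraph) : Prop :=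
  P.verts.Nonempty ∧ P.Connected ∧ (∀ w ∈ P.verts, (P.neighborSet w).ncard ≤ 2) ∧
    ∃ w ∈ P.verts, (P.neighborSet w).ncard ≤ 1

/-- A segment of `G`: a maximal path (with at least one edge) all of whose internal
vertices have degree exactly two in `G`. -/
def IsSegment {V : Type u} (G : SimpleGraph V) (P : G.Subgraph) : Prop :=
  IsPathSub P ∧ P.edgeSet.Nonempty ∧
    (∀ w ∈ P.verts, (P.neighborSet w).ncard = 2 → (G.neighborSet w).ncard = 2) ∧
    (∀ w ∈ P.verts, (P.neighborSet w).ncard ≤ 1 → (G.neighborSet w).ncard ≠ 2)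

/-- Axiom (D1): a cycle double cover: a set of cycles such that every edge of `G`
lies on exactly two of them. -/
def IsCDC {V : Type u} (G : SimpleGraph V) (D : Set G.Subgraph) : Prop :=
  (∀ C ∈ D, IsCycleSub C) ∧ ∀ e ∈ G.edgeSet, {C ∈ D | e ∈ C.edgeSet}.ncard = 2

/-- Axiom (D2): at every vertex the incident edges admit a cyclic order in which
every pair of consecutive edges lies on exactly one common disk. -/
def AxiomD2 {V : Type u} (G : SimpleGraph V) (D : Set G.Subgraph) : Prop :=
  ∀ w : V, ∃ σ : Equiv.Perm (G.neighborSet w),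
    (∀ x y, σ.SameCycle x y) ∧
    ∀ u : G.neighborSet w,
      {C ∈ D | s(w, (u : V)) ∈ C.edgeSet ∧ s(w, ((σ u : G.neighborSet w) : V)) ∈ C.edgeSet}.ncard = 1

/-- Axiom (D3): any two distinct disks intersect in at most one vertex or in a segment. -/
def AxiomD3 {V : Type u} (G : SimpleGraph V) (D : Set G.Subgraph) : Prop :=
  ∀ C1 ∈ D, ∀ C2 ∈ D, C1 ≠ C2 → (C1 ⊓ C2).verts.Subsingleton ∨ IsSegment G (C1 ⊓ C2)

/-- A weak disk system: a cycle double cover satisfying (D3). -/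
def IsWeakDiskSystem {V : Type u} (G : SimpleGraph V) (D : Set G.Subgraph) : Prop :=
  IsCDC G D ∧ AxiomD3 G D

/-- A disk system: a cycle double cover satisfying (D2) and (D3). -/
def IsDiskSystem {V : Type u} (G : SimpleGraph V) (D : Set G.Subgraph) : Prop :=
  IsCDC G D ∧ AxiomD2 G D ∧ AxiomD3 G D

/-- Two vertices are confluent if a common disk contains both. -/
def ConfluentVV {V : Type u} {G : SimpleGraph V} (D : Set G.Subgraph) (x y : V) : Prop :=
  ∃ C ∈ D, x ∈ C.verts ∧ y ∈ C.verts

/-- A vertex is confluent with an edge if a common disk contains both. -/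
def ConfluentVE {V : Type u} {G : SimpleGraph V} (D : Set G.Subgraph) (x : V) (e : Sym2 V) : Prop :=
  ∃ C ∈ D, x ∈ C.verts ∧ e ∈ C.edgeSet

/-- Two edges are confluent if a common disk contains both. -/
def ConfluentEE {V : Type u} {G : SimpleGraph V} (D : Set G.Subgraph) (e f : Sym2 V) : Prop :=
  ∃ C ∈ D, e ∈ C.edgeSet ∧ f ∈ C.edgeSet

/-! ### Conforming splits -/

/-- The split of `v` along disks `D1, D2`: it is a valid split and, among the disks
through `v`, exactly `D1` and `D2` meet both `N1` and `N2`, and they intersect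
precisely in `v` (axioms (S1) and (S2)). -/
def SplitConformingWith {V : Type u} (G : SimpleGraph V) (D : Set G.Subgraph) (v : V)
    (N1 N2 : Set V) (D1 D2 : G.Subgraph) : Prop :=
  IsValidSplitData G v N1 N2 ∧ D1 ∈ D ∧ D2 ∈ D ∧ D1 ≠ D2 ∧
    {C ∈ D | v ∈ C.verts ∧ (C.verts ∩ N1).Nonempty ∧ (C.verts ∩ N2).Nonempty} = {D1, D2} ∧
    (D1 ⊓ D2).verts = {v}

/-- A conforming split (with respect to `D`). -/
def IsConformingSplit {V : Type u} (G : SimpleGraph V) (D : Set G.Subgraph) (v : V)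
    (N1 N2 : Set V) : Prop :=
  ∃ D1 D2, SplitConformingWith G D v N1 N2 D1 D2

/-- A conforming split along the disk `C`. -/
def IsConformingSplitAlong {V : Type u} (G : SimpleGraph V) (D : Set G.Subgraph) (v : V)
    (N1 N2 : Set V) (C : G.Subgraph) : Prop :=
  ∃ E, SplitConformingWith G D v N1 N2 C E ∨ SplitConformingWith G D v N1 N2 E C

/-- `C'` (a cycle of the split graph) lifts the cycle `C` of `G`: contracting the new
edge maps `C'` onto `C`. -/
def DiskLift {V : Type u} (G : SimpleGraph V) (v : V) {N1 N2 : Set V}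
    (C' : (splitGraph G v N1 N2).Subgraph) (C : G.Subgraph) : Prop :=
  C.verts = (fun w : Option V => w.getD v) '' C'.verts ∧
  C.edgeSet = Sym2.map (fun w : Option V => w.getD v) '' C'.edgeSet \ {s(v, v)}

/-- The disk system induced in the split graph: the cycles that lift disks of `D`. -/
def InducedDisks {V : Type u} (G : SimpleGraph V) (D : Set G.Subgraph) (v : V)
    (N1 N2 : Set V) : Set (splitGraph G v N1 N2).Subgraph :=
  {C' | IsCycleSub C' ∧ ∃ C ∈ D, DiskLift G v C' C}

/-- Conforming expansions, together with the induced disk system and the set of new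
edges. Each successive split is conforming with respect to the disk system induced
so far. -/
inductive IsConformingExpansion {V : Type u} (G : SimpleGraph V) (D : Set G.Subgraph) :
    {W : Type u} → (G' : SimpleGraph W) → Set G'.Subgraph → Set (Sym2 W) → Prop
  | refl : IsConformingExpansion G D G D ∅
  | step {W : Type u} {G' : SimpleGraph W} {D' : Set G'.Subgraph} {newE : Set (Sym2 W)}
      (h : IsConformingExpansion G D G' D' newE) (v : W) (N1 N2 : Set W)
      (hc : IsConformingSplit G' D' v N1 N2) :
      IsConformingExpansion G D (splitGraph G' v N1 N2) (InducedDisks G' D' v N1 N2)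
        (Sym2.map some '' newE ∪ {s(some v, none)})

/-- A non-conforming expansion: a conforming expansion followed by a non-conforming
split, followed by an arbitrary further expansion. -/
def IsNonConformingExpansion {V W : Type u} (G : SimpleGraph V) (D : Set G.Subgraph)
    (H : SimpleGraph W) : Prop :=
  ∃ (W₁ : Type u) (G₁ : SimpleGraph W₁) (D₁ : Set G₁.Subgraph) (newE₁ : Set (Sym2 W₁)),
    IsConformingExpansion G D G₁ D₁ newE₁ ∧
    ∃ (v : W₁) (N1 N2 : Set W₁), IsValidSplitData G₁ v N1 N2 ∧
      ¬ IsConformingSplit G₁ D₁ v N1 N2 ∧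
      ∃ (π : W → Option W₁) (newE : Set (Sym2 W)),
        IsExpansion (splitGraph G₁ v N1 N2) H π newE

/-! ### Building blocks for the enlargement operations -/

/-- Add the edge `uv` to `G`. -/
def addE {V : Type u} (G : SimpleGraph V) (x y : V) : SimpleGraph V :=
  G ⊔ SimpleGraph.fromEdgeSet {s(x, y)}

/-- Add a new vertex (`none`) adjacent exactly to the vertices of `S`. -/
def addVertexAdj {V : Type u} (G : SimpleGraph V) (S : Set V) : SimpleGraph (Option V) :=
  SimpleGraph.fromRel (fun x y =>
    (∃ a b, x = some a ∧ y = some b ∧ G.Adj a b) ∨ (x = none ∧ ∃ a ∈ S, y = some a))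

/-- Subdivide the edge `xy` (the new vertex is `none`) and join `u` to the new vertex. -/
def subdivideJoin {V : Type u} (G : SimpleGraph V) (x y u : V) : SimpleGraph (Option V) :=
  SimpleGraph.fromRel (fun a b =>
    (∃ p q, a = some p ∧ b = some q ∧ G.Adj p q ∧ s(p, q) ≠ s(x, y)) ∨
    (a = none ∧ (b = some x ∨ b = some y ∨ b = some u)))

/-- Subdivide the edges `ab` and `cd` (new vertices `some none` and `none`) and join
the two new vertices by an edge. -/
def doubleSubdivideJoin {V : Type u} (G : SimpleGraph V) (a b c d : V) :
    SimpleGraph (Option (Option V)) :=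
  SimpleGraph.fromRel (fun p q =>
    (∃ x y, p = some (some x) ∧ q = some (some y) ∧ G.Adj x y ∧
        s(x, y) ≠ s(a, b) ∧ s(x, y) ≠ s(c, d)) ∨
    (p = some none ∧ (q = some (some a) ∨ q = some (some b))) ∨
    (p = none ∧ (q = some (some c) ∨ q = some (some d) ∨ q = some none)))

/-- `a, b, c, d` occur on the cycle `C` in this cyclic order (in one of the two
orientations): `{a,c}` separates `b` from `d` on `C` and vice versa. -/
def CyclicOrderOn {V : Type u} {G : SimpleGraph V} (C : G.Subgraph) (a b c d : V) : Prop :=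
  a ∈ C.verts ∧ b ∈ C.verts ∧ c ∈ C.verts ∧ d ∈ C.verts ∧
  [a, b, c, d].Nodup ∧
  (∀ (hb : b ∈ (C.deleteVerts {a, c}).verts) (hd : d ∈ (C.deleteVerts {a, c}).verts),
    ¬ (C.deleteVerts {a, c}).coe.Reachable ⟨b, hb⟩ ⟨d, hd⟩) ∧
  (∀ (ha : a ∈ (C.deleteVerts {b, d}).verts) (hc : c ∈ (C.deleteVerts {b, d}).verts),
    ¬ (C.deleteVerts {b, d}).coe.Reachable ⟨a, ha⟩ ⟨c, hc⟩)

/-! ### The enlargement operations, phrased as "H has a minor isomorphic to a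
type-i enlargement of G with respect to D" -/

/-- Type 1 (non-conforming jump). -/
def HasType1Minor {V : Type u} {U : Type v} (G : SimpleGraph V) (D : Set G.Subgraph)
    (H : SimpleGraph U) : Prop :=
  ∃ x y : V, x ≠ y ∧ ¬ ConfluentVV D x y ∧ IsMinorOf (addE G x y) H

/-- Type 2 (cross). -/
def HasType2Minor {V : Type u} {U : Type v} (G : SimpleGraph V) (D : Set G.Subgraph)
    (H : SimpleGraph U) : Prop :=
  ∃ C ∈ D, ∃ a b c d : V, CyclicOrderOn C a b c d ∧
    IsMinorOf (addE (addE G a c) b d) H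

/-- Type 3 (non-conforming split). -/
def HasType3Minor {V : Type u} {U : Type v} (G : SimpleGraph V) (D : Set G.Subgraph)
    (H : SimpleGraph U) : Prop :=
  ∃ (w : V) (N1 N2 : Set V), IsValidSplitData G w N1 N2 ∧
    ¬ IsConformingSplit G D w N1 N2 ∧ IsMinorOf (splitGraph G w N1 N2) H

/-- Type 4 (split + non-conforming jump). In `splitGraph G v N1 N2` the vertices
`some v` and `none` play the roles of `v₁` and `v₂`. -/
def HasType4Minor {V : Type u} {U : Type v} (G : SimpleGraph V) (D : Set G.Subgraph)
    (H : SimpleGraph U) : Prop :=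
  ∃ C ∈ D, ∃ x w : V, x ∈ C.verts ∧ w ∈ C.verts ∧ ¬ G.Adj x w ∧ x ≠ w ∧
    ∃ N1 N2 : Set V, IsConformingSplit G D w N1 N2 ∧
      ¬ ConfluentVV (InducedDisks G D w N1 N2) (some x) none ∧
      IsMinorOf (addE (splitGraph G w N1 N2) (some x) none) H

/-- Type 5 (double split + non-conforming jump). -/
def HasType5Minor {V : Type u} {U : Type v} (G : SimpleGraph V) (D : Set G.Subgraph)
    (H : SimpleGraph U) : Prop :=
  ∃ x w : V, G.Adj x w ∧ ∃ C1 ∈ D, ∃ C2 ∈ D, C1 ≠ C2 ∧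
    s(x, w) ∈ C1.edgeSet ∧ s(x, w) ∈ C2.edgeSet ∧
    ∃ M1 M2 : Set V, IsConformingSplitAlong G D x M1 M2 C1 ∧ w ∈ M1 ∧
    ∃ C2' ∈ InducedDisks G D x M1 M2, DiskLift G x C2' C2 ∧
    ∃ P1 P2 : Set (Option V),
      IsConformingSplitAlong (splitGraph G x M1 M2) (InducedDisks G D x M1 M2)
        (some w) P1 P2 C2' ∧ (some x) ∈ P1 ∧
      IsMinorOf (addE (splitGraph (splitGraph G x M1 M2) (some w) P1 P2)
        (some none) none) H

/-- Type 6 (split + cross). -/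
def HasType6Minor {V : Type u} {U : Type v} (G : SimpleGraph V) (D : Set G.Subgraph)
    (H : SimpleGraph U) : Prop :=
  ∃ C ∈ D, ∃ x w z : V, x ∈ C.verts ∧ w ∈ C.verts ∧ z ∈ C.verts ∧
    ¬ G.Adj x w ∧ ¬ G.Adj x z ∧ w ≠ z ∧ x ≠ w ∧ x ≠ z ∧
    ∃ N1 N2 : Set V, IsConformingSplitAlong G D x N1 N2 C ∧
    ∃ C' ∈ InducedDisks G D x N1 N2, DiskLift G x C' C ∧
      CyclicOrderOn C' (some x) none (some w) (some z) ∧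
      IsMinorOf (addE (addE (splitGraph G x N1 N2) (some x) (some w)) none (some z)) H

/-- Type 7 (double split + cross). -/
def HasType7Minor {V : Type u} {U : Type v} (G : SimpleGraph V) (D : Set G.Subgraph)
    (H : SimpleGraph U) : Prop :=
  ∃ C ∈ D, ∃ x w : V, x ∈ C.verts ∧ w ∈ C.verts ∧ ¬ G.Adj x w ∧ x ≠ w ∧
    ∃ M1 M2 : Set V, IsConformingSplitAlong G D x M1 M2 C ∧
    ∃ C' ∈ InducedDisks G D x M1 M2, DiskLift G x C' C ∧
    ∃ P1 P2 : Set (Option V),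
      IsConformingSplitAlong (splitGraph G x M1 M2) (InducedDisks G D x M1 M2)
        (some w) P1 P2 C' ∧
    ∃ C'' ∈ InducedDisks (splitGraph G x M1 M2) (InducedDisks G D x M1 M2) (some w) P1 P2,
      DiskLift (splitGraph G x M1 M2) (some w) C'' C' ∧
      CyclicOrderOn C'' (some (some x)) (some none) (some (some w)) none ∧
      IsMinorOf (addE (addE (splitGraph (splitGraph G x M1 M2) (some w) P1 P2)
        (some (some x)) (some (some w))) (some none) none) H

/-- Weak type 8 (weak triad): add a vertex adjacent to three vertices not all on
a common disk. -/
def HasWeakType8Minor {V : Type u} {U : Type v} (G : SimpleGraph V) (D : Set G.Subgraph)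
    (H : SimpleGraph U) : Prop :=
  ∃ x1 x2 x3 : V, x1 ≠ x2 ∧ x1 ≠ x3 ∧ x2 ≠ x3 ∧
    (¬ ∃ C ∈ D, x1 ∈ C.verts ∧ x2 ∈ C.verts ∧ x3 ∈ C.verts) ∧
    IsMinorOf (addVertexAdj G {x1, x2, x3}) H

/-- Type 8 (non-separating triad). -/
def HasType8Minor {V : Type u} {U : Type v} (G : SimpleGraph V) (D : Set G.Subgraph)
    (H : SimpleGraph U) : Prop :=
  ∃ x1 x2 x3 : V, x1 ≠ x2 ∧ x1 ≠ x3 ∧ x2 ≠ x3 ∧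
    ConfluentVV D x1 x2 ∧ ConfluentVV D x1 x3 ∧ ConfluentVV D x2 x3 ∧
    (¬ ∃ C ∈ D, x1 ∈ C.verts ∧ x2 ∈ C.verts ∧ x3 ∈ C.verts) ∧
    ¬ G.Adj x1 x2 ∧ ¬ G.Adj x1 x3 ∧ ¬ G.Adj x2 x3 ∧
    ((⊤ : G.Subgraph).deleteVerts {x1, x2, x3}).coe.Connected ∧
    IsMinorOf (addVertexAdj G {x1, x2, x3}) H

/-- Weak type 9 (weak non-conforming T-edge). -/
def HasWeakType9Minor {V : Type u} {U : Type v} (G : SimpleGraph V) (D : Set G.Subgraph)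
    (H : SimpleGraph U) : Prop :=
  ∃ x y z : V, G.Adj x y ∧ ¬ ConfluentVE D z s(x, y) ∧
    IsMinorOf (subdivideJoin G x y z) H

/-- Type 9 (non-conforming T-edge). -/
def HasType9Minor {V : Type u} {U : Type v} (G : SimpleGraph V) (D : Set G.Subgraph)
    (H : SimpleGraph U) : Prop :=
  ∃ x y z : V, G.Adj x y ∧ ¬ ConfluentVE D z s(x, y) ∧
    ConfluentVV D z x ∧ ConfluentVV D z y ∧ ¬ G.Adj z x ∧ ¬ G.Adj z y ∧
    ((⊤ : G.Subgraph).deleteVerts {z, x, y}).coe.Connected ∧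
    IsMinorOf (subdivideJoin G x y z) H

/-! ### Prism, peripheral cycles, planarity -/

/-- The prism: the complement of a 6-cycle on six vertices. -/
def prismGraph : SimpleGraph (Fin 6) :=
  (SimpleGraph.fromRel (fun i j : Fin 6 => j = i + 1))ᶜ

def IsPrism {V : Type u} (G : SimpleGraph V) : Prop :=
  Nonempty (G ≃g prismGraph)

/-- A peripheral cycle: an induced cycle whose deletion leaves a connected graph. -/
def IsPeripheral {V : Type u} (G : SimpleGraph V) (C : G.Subgraph) : Prop :=
  IsCycleSub C ∧ C.IsInduced ∧ ((⊤ : G.Subgraph).deleteVerts C.verts).coe.Connected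

/-- The set of all peripheral cycles of `G`. -/
def peripheralDisks {V : Type u} (G : SimpleGraph V) : Set G.Subgraph :=
  {C | IsPeripheral G C}

/-- Planarity, encoded via Wagner's theorem: no `K₅` and no `K₃,₃` minor. -/
def IsPlanar {V : Type u} (G : SimpleGraph V) : Prop :=
  ¬ IsMinorOf (completeGraph (Fin 5)) G ∧
  ¬ IsMinorOf (completeBipartiteGraph (Fin 3) (Fin 3)) G

/-- Type 10 (the enlargement of a prism, i.e. `V₈`). -/
def HasType10Minor {V : Type u} {U : Type v} (G : SimpleGraph V) (H : SimpleGraph U) : Prop :=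
  IsPrism G ∧ ∃ a b c d : V, G.Adj a b ∧ G.Adj c d ∧ s(a, b) ≠ s(c, d) ∧
    (∃ t, G.Adj a t ∧ G.Adj b t) ∧ (∃ t, G.Adj c t ∧ G.Adj d t) ∧
    (¬ ∃ C : G.Subgraph, IsPeripheral G C ∧ s(a, b) ∈ C.edgeSet ∧ s(c, d) ∈ C.edgeSet) ∧
    IsMinorOf (doubleSubdivideJoin G a b c d) H

/-! ### Subdivisions -/

/-- Data witnessing that `S` is (isomorphic to) a subdivision of `Gb`:
an injection `f` of branch-vertices together with internally disjoint paths of `S`,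
one for each edge of `Gb`, covering `S`. -/
structure SubdivisionData {V : Type u} {W : Type v} (S : SimpleGraph V)
    (Gb : SimpleGraph W) where
  f : W → V
  path : ∀ a b : W, Gb.Adj a b → S.Walk (f a) (f b)
  inj : Function.Injective f
  isPath : ∀ a b hab, (path a b hab).IsPath
  symmSupport : ∀ a b (hab : Gb.Adj a b),
    (path b a hab.symm).support = (path a b hab).support.reverse
  interDisj : ∀ a b hab c d hcd, s(a, b) ≠ s(c, d) →
    ∀ x, x ∈ (path a b hab).support → x ∈ (path c d hcd).support → x ∈ Set.range f
  branchOnPath : ∀ a b hab (w : W), f w ∈ (path a b hab).support → w = a ∨ w = b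
  coverV : ∀ x : V, x ∈ Set.range f ∨ ∃ a b hab, x ∈ (path a b hab).support
  coverE : ∀ e ∈ S.edgeSet, ∃ a b hab, e ∈ (path a b hab).edges

/-- `G` is a subdivision of `Gb`. -/
def IsSubdivisionOf {V : Type u} {W : Type v} (S : SimpleGraph V) (Gb : SimpleGraph W) : Prop :=
  Nonempty (SubdivisionData S Gb)

/-- The cycle of the subdivision corresponding to a cycle `C` of the base graph
(the union of the paths replacing the edges of `C`). -/
def SubdivisionData.inducedDisk {V : Type u} {W : Type v} {S : SimpleGraph V}
    {Gb : SimpleGraph W} (sd : SubdivisionData S Gb) (C : Gb.Subgraph) : S.Subgraph where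
  verts := {x | ∃ (a b : W) (hC : C.Adj a b), x ∈ (sd.path a b (C.adj_sub hC)).support}
  Adj x y := ∃ (a b : W) (hC : C.Adj a b), s(x, y) ∈ (sd.path a b (C.adj_sub hC)).edges
  adj_sub := by
    rintro x y ⟨a, b, hC, he⟩
    exact (SimpleGraph.mem_edgeSet S).mp ((sd.path a b (C.adj_sub hC)).edges_subset_edgeSet he)
  edge_vert := by
    rintro x y ⟨a, b, hC, he⟩
    exact ⟨a, b, hC, SimpleGraph.Walk.fst_mem_support_of_mem_edges _ he⟩
  symm := by
    constructor
    rintro x y ⟨a, b, hC, he⟩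
    exact ⟨a, b, hC, by rwa [Sym2.eq_swap]⟩

/-- The weak disk system induced in the subdivision by a system of the base graph. -/
def SubdivisionData.inducedDisks {V : Type u} {W : Type v} {S : SimpleGraph V}
    {Gb : SimpleGraph W} (sd : SubdivisionData S Gb) (D : Set Gb.Subgraph) :
    Set S.Subgraph :=
  sd.inducedDisk '' D

/-! ### Bridges and locally planar extensions -/

/-- `B` is an `S`-bridge of `H`: either a single edge of `H` not in `S` with both ends
in `S`, or a component of `H − V(S)` together with all edges to `S`. -/
def IsBridgeOf {U : Type u} {H : SimpleGraph U} (S B : H.Subgraph) : Prop :=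
  (∃ x y : U, H.Adj x y ∧ s(x, y) ∉ S.edgeSet ∧ x ∈ S.verts ∧ y ∈ S.verts ∧
      B.verts = {x, y} ∧ ∀ p q, B.Adj p q ↔ s(p, q) = s(x, y)) ∨
  (∃ J : Set U, J.Nonempty ∧ J ∩ S.verts = ∅ ∧
    (∀ x ∈ J, ∀ y, H.Adj x y → y ∉ S.verts → y ∈ J) ∧ (H.induce J).Connected ∧
    B.verts = J ∪ {y ∈ S.verts | ∃ x ∈ J, H.Adj x y} ∧
    ∀ p q, B.Adj p q ↔ (H.Adj p q ∧ (p ∈ J ∨ q ∈ J)))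

/-- The induced system `D` (of cycles of `S.coe`) is locally planar in `H`:
every bridge attaches to a single disk, and for each disk the union of the disk
with its bridges has a planar drawing with the disk bounding the unbounded face
(encoded: adding an apex vertex joined to the disk keeps the graph planar). -/
def LocallyPlanar {U : Type u} (H : SimpleGraph U) (S : H.Subgraph)
    (D : Set S.coe.Subgraph) : Prop :=
  ∃ φ : H.Subgraph → S.coe.Subgraph,
    (∀ B, IsBridgeOf S B → φ B ∈ D ∧
      ∀ x ∈ B.verts ∩ S.verts, x ∈ Subtype.val '' (φ B).verts) ∧
    ∀ C ∈ D, IsPlanar (addVertexAdj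
      ((SimpleGraph.Subgraph.coeSubgraph C ⊔
        ⨆ B ∈ {B : H.Subgraph | IsBridgeOf S B ∧ φ B = C}, B).coe)
      {x | (x : U) ∈ Subtype.val '' C.verts})

/-- The disk system `D` of `G` has a locally planar extension into `H`. -/
def HasLocallyPlanarExtension {V U : Type u} (G : SimpleGraph V) (D : Set G.Subgraph)
    (H : SimpleGraph U) : Prop :=
  ∃ (W : Type u) (G' : SimpleGraph W) (D' : Set G'.Subgraph) (newE : Set (Sym2 W)),
    IsConformingExpansion G D G' D' newE ∧
    ∃ (S : H.Subgraph) (sd : SubdivisionData S.coe G'),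
      LocallyPlanar H S (sd.inducedDisks D')

/-! ### Degenerate separations -/

/-- A degenerate separation of order three. -/
def Degenerate {V : Type u} (G : SimpleGraph V) (A B : Set V) : Prop :=
  ((A \ B).ncard = 1 ∧ ∀ x ∈ A ∩ B, ∀ y ∈ A ∩ B, ¬ G.Adj x y) ∨
  (∃ v1 v2 v3 u1 u2 u3 : V, A ∩ B = {v1, v2, v3} ∧
    v1 ≠ v2 ∧ v1 ≠ v3 ∧ v2 ≠ v3 ∧
    u1 ∈ A ∧ u2 ∈ A ∧ u3 ∈ A ∧ G.Adj u1 u2 ∧ G.Adj u1 u3 ∧ G.Adj u2 u3 ∧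
    (u1 = v1 ∨ G.Adj u1 v1) ∧ (u2 = v2 ∨ G.Adj u2 v2) ∧ (u3 = v3 ∨ G.Adj u3 v3) ∧
    A ⊆ {u1, u2, u3, v1, v2, v3} ∧
    ∀ x ∈ A, ∀ y ∈ A, G.Adj x y →
      s(x, y) ∈ ({s(u1, v1), s(u2, v2), s(u3, v3),
                  s(u1, u2), s(u1, u3), s(u2, u3)} : Set (Sym2 V)))
section SplitAux

variable {V : Type u} {G : SimpleGraph V} {v : V} {N1 N2 : Set V}

lemma splitGraph_adj_some_some {a b : V} (ha : a ≠ v) (hb : b ≠ v) :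
    (splitGraph G v N1 N2).Adj (some a) (some b) ↔ G.Adj a b := by
  rw [splitGraph, SimpleGraph.fromRel_adj]
  constructor
  · rintro ⟨-, h | h⟩ <;>
      rcases h with ⟨a', b', ha', hb', haa, hbb, hadj⟩ | ⟨hv, -⟩ | ⟨h0, -⟩ | ⟨h0, -⟩ <;>
        simp_all <;> exact hadj.symm
  · intro h
    exact ⟨by simp [h.ne], Or.inl (Or.inl ⟨a, b, rfl, rfl, ha, hb, h⟩)⟩

lemma splitGraph_adj_v_N1 {b : V} (hb : b ∈ N1) (hbv : b ≠ v) :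
    (splitGraph G v N1 N2).Adj (some v) (some b) := by
  rw [splitGraph, SimpleGraph.fromRel_adj]
  exact ⟨by simp [(Ne.symm hbv)], Or.inl (Or.inr (Or.inl ⟨rfl, b, hb, rfl⟩))⟩

lemma splitGraph_adj_none_some {b : V} (hb : b ∈ N2) :
    (splitGraph G v N1 N2).Adj none (some b) := by
  rw [splitGraph, SimpleGraph.fromRel_adj]
  exact ⟨by simp, Or.inl (Or.inr (Or.inr (Or.inl ⟨rfl, b, hb, rfl⟩)))⟩

lemma splitGraph_adj_v_none :
    (splitGraph G v N1 N2).Adj (some v) none := by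
  rw [splitGraph, SimpleGraph.fromRel_adj]
  exact ⟨by simp, Or.inr (Or.inr (Or.inr (Or.inr ⟨rfl, rfl⟩)))⟩

lemma mem_delVerts {W : Type u} {H : SimpleGraph W} {s : Set W} {x : W} (hx : x ∉ s) :
    x ∈ ((⊤ : H.Subgraph).deleteVerts s).verts := ⟨Set.mem_univ x, hx⟩

lemma adj_delVerts {W : Type u} {H : SimpleGraph W} {s : Set W} {x y : W} (hx : x ∉ s) (hy : y ∉ s)
    (h : H.Adj x y) :
    ((⊤ : H.Subgraph).deleteVerts s).coe.Adj ⟨x, mem_delVerts hx⟩ ⟨y, mem_delVerts hy⟩ := by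
  simp [SimpleGraph.Subgraph.coe_adj, SimpleGraph.Subgraph.deleteVerts_adj, hx, hy, h]

lemma reach_some_v_some (hs : IsValidSplitData G v N1 N2) {s : Set (Option V)}
    (hvs : (some v : Option V) ∉ s) {c : V} (hcs : (some c : Option V) ∉ s)
    (hadj : G.Adj v c) (hn : c ∈ N2 → (none : Option V) ∉ s) :
    ((⊤ : (splitGraph G v N1 N2).Subgraph).deleteVerts s).coe.Reachable
      ⟨some v, mem_delVerts hvs⟩ ⟨some c, mem_delVerts hcs⟩ := by
  have hc' : c ∈ N1 ∪ N2 := by rw [hs.1]; exact hadj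
  have hcv : c ≠ v := fun h => G.irrefl (h ▸ hadj)
  rcases hc' with h1 | h2
  · exact (adj_delVerts hvs hcs (splitGraph_adj_v_N1 h1 hcv)).reachable
  · exact ((adj_delVerts hvs (hn h2) splitGraph_adj_v_none).reachable).trans
      ((adj_delVerts (hn h2) hcs (splitGraph_adj_none_some h2)).reachable)

lemma split_reach_edge (hs : IsValidSplitData G v N1 N2) {s : Set (Option V)}
    {a b : V} (hsa : (some a : Option V) ∉ s) (hsb : (some b : Option V) ∉ s)
    (hab : G.Adj a b) (hnv : (a = v ∨ b = v) → (none : Option V) ∉ s) :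
    ((⊤ : (splitGraph G v N1 N2).Subgraph).deleteVerts s).coe.Reachable
      ⟨some a, mem_delVerts hsa⟩ ⟨some b, mem_delVerts hsb⟩ := by
  by_cases hav : a = v
  · subst hav
    exact reach_some_v_some hs hsa hsb hab (fun _ => hnv (Or.inl rfl))
  by_cases hbv : b = v
  · subst hbv
    exact (reach_some_v_some hs hsb hsa hab.symm (fun _ => hnv (Or.inr rfl))).symm
  exact (adj_delVerts hsa hsb ((splitGraph_adj_some_some hav hbv).mpr hab)).reachable

lemma split_reach (hs : IsValidSplitData G v N1 N2) {s : Set (Option V)} {t : Set V}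
    (hts : ∀ a : V, a ∉ t → (some a : Option V) ∉ s)
    (hnone : (none : Option V) ∉ s ∨ v ∈ t) :
    ∀ (x y : ↥((⊤ : G.Subgraph).deleteVerts t).verts),
      ((⊤ : G.Subgraph).deleteVerts t).coe.Reachable x y →
      ((⊤ : (splitGraph G v N1 N2).Subgraph).deleteVerts s).coe.Reachable
        ⟨some x.1, mem_delVerts (hts _ x.2.2)⟩ ⟨some y.1, mem_delVerts (hts _ y.2.2)⟩ := by
  intro x y h
  obtain ⟨w⟩ := h
  induction w with
  | nil => exact SimpleGraph.Reachable.refl _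
  | cons hadj w ih =>
    rename_i p q r
    have hpq : G.Adj p.1 q.1 := by
      have := hadj
      rw [SimpleGraph.Subgraph.coe_adj, SimpleGraph.Subgraph.deleteVerts_adj] at this
      exact this.2.2.2.2
    refine (split_reach_edge hs (hts _ p.2.2) (hts _ q.2.2) hpq ?_).trans ih
    rintro (h | h) <;> rcases hnone with hn | hv
    · exact hn
    · exact absurd hv (h ▸ p.2.2)
    · exact hn
    · exact absurd hv (h ▸ q.2.2)

end SplitAux

/-- splitting a vertex of degree ≥ 4 in a 3-connected graph
yields a 3-connected graph. -/
theorem split_threeConnected {V : Type u} [Fintype V] (G : SimpleGraph V)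
    (hG : ThreeConnected G) (v : V) (N1 N2 : Set V)
    (hdeg : 4 ≤ (G.neighborSet v).ncard)
    (hs : IsValidSplitData G v N1 N2) :
    ThreeConnected (splitGraph G v N1 N2) := by
  obtain ⟨hcard, hconn⟩ := hG
  have hvN1 : v ∉ N1 := fun h => G.irrefl ((hs.1 ▸ Set.mem_union_left N2 h : v ∈ G.neighborSet v))
  have hvN2 : v ∉ N2 := fun h => G.irrefl ((hs.1 ▸ Set.mem_union_right N1 h : v ∈ G.neighborSet v))
  refine ⟨by rw [Finite.card_option]; omega, ?_⟩
  intro s hscard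
  set t : Set V := {a | some a ∈ s} with ht
  have hts : ∀ a : V, a ∉ t → (some a : Option V) ∉ s := fun a h => h
  have hst : ∀ a : V, (some a : Option V) ∉ s → a ∉ t := fun a h => h
  have himg : some '' t ⊆ s := by rintro _ ⟨a, ha, rfl⟩; exact ha
  have himgcard : (some '' t).ncard = t.ncard :=
    Set.ncard_image_of_injective t (Option.some_injective V)
  have htcard : t.ncard ≤ 2 := by
    have := Set.ncard_le_ncard himg s.toFinite; omega
  rw [SimpleGraph.connected_iff]
  by_cases hn : (none : Option V) ∈ s
  · -- none is deleted
    have htle1 : t.ncard ≤ 1 := by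
      have h1 : insert (none : Option V) (some '' t) ⊆ s := Set.insert_subset hn himg
      have h2 : (insert (none : Option V) (some '' t)).ncard = (some '' t).ncard + 1 :=
        Set.ncard_insert_of_notMem (by simp) (Set.toFinite _)
      have h3 := Set.ncard_le_ncard h1 s.toFinite
      omega
    by_cases hv : v ∈ t
    · -- both some v and none deleted
      have hnonempty : ∃ a : V, a ∉ t := by
        by_contra h
        push_neg at h
        have huniv : t = Set.univ := Set.eq_univ_of_forall h
        have := Set.ncard_univ V
        rw [huniv] at htcard
        omega
      obtain ⟨a0, ha0⟩ := hnonempty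
      refine ⟨?_, ⟨⟨some a0, mem_delVerts (hts _ ha0)⟩⟩⟩
      rintro ⟨x, hx⟩ ⟨y, hy⟩
      cases x with
      | none => exact absurd hn hx.2
      | some a =>
        cases y with
        | none => exact absurd hn hy.2
        | some b =>
          have ha : a ∉ t := hst a hx.2
          have hb : b ∉ t := hst b hy.2
          exact split_reach hs hts (Or.inr hv) ⟨a, mem_delVerts ha⟩ ⟨b, mem_delVerts hb⟩
            ((hconn t htcard).preconnected _ _)
    · -- none deleted, some v present
      set t' : Set V := insert v t with ht'
      have ht'card : t'.ncard ≤ 2 := le_trans (Set.ncard_insert_le v t) (by omega)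
      have hts' : ∀ a : V, a ∉ t' → (some a : Option V) ∉ s :=
        fun a h => hts a (fun h' => h (Set.mem_insert_of_mem v h'))
      have hvt' : v ∈ t' := Set.mem_insert v t
      have hvs : (some v : Option V) ∉ s := hts v hv
      obtain ⟨b1, hb1N, hb1t'⟩ : ∃ b1, b1 ∈ N1 ∧ b1 ∉ t' := by
        by_contra h
        push_neg at h
        have hsub : N1 ⊆ t := by
          intro x hx
          rcases Set.mem_insert_iff.mp (h x hx) with rfl | hxt
          · exact absurd hx hvN1
          · exact hxt
        have := Set.ncard_le_ncard hsub t.toFinite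
        have := hs.2.2.1
        omega
      have hb1v : b1 ≠ v := fun h => hvN1 (h ▸ hb1N)
      have hb1s : (some b1 : Option V) ∉ s := hts' b1 hb1t'
      have claim : ∀ (z : Option V) (hz : z ∈ ((⊤ : (splitGraph G v N1 N2).Subgraph).deleteVerts s).verts),
          ((⊤ : (splitGraph G v N1 N2).Subgraph).deleteVerts s).coe.Reachable
            ⟨z, hz⟩ ⟨some v, mem_delVerts hvs⟩ := by
        intro z hz
        cases z with
        | none => exact absurd hn hz.2
        | some a =>
          rcases eq_or_ne a v with rfl | hav
          · exact SimpleGraph.Reachable.refl _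
          · have hat' : a ∉ t' := by
              intro h
              rcases Set.mem_insert_iff.mp h with h' | h'
              · exact hav h'
              · exact (hst a hz.2) h'
            refine (split_reach hs hts' (Or.inr hvt') ⟨a, mem_delVerts hat'⟩
              ⟨b1, mem_delVerts hb1t'⟩ ((hconn t' ht'card).preconnected _ _)).trans ?_
            exact ((adj_delVerts hvs hb1s (splitGraph_adj_v_N1 hb1N hb1v)).reachable).symm
      exact ⟨fun x y => (claim x.1 x.2).trans (claim y.1 y.2).symm,
        ⟨⟨some v, mem_delVerts hvs⟩⟩⟩
  · -- none present
    by_cases hv : v ∈ t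
    · -- some v deleted, none present: hub is none
      obtain ⟨b0, hb0N, hb0t⟩ : ∃ b0, b0 ∈ N2 ∧ b0 ∉ t := by
        by_contra h
        push_neg at h
        have hsub : N2 ⊆ t \ {v} := fun x hx => ⟨h x hx, fun h' => hvN2 (h' ▸ hx)⟩
        have h1 := Set.ncard_le_ncard hsub (Set.toFinite _)
        have h2 : (t \ {v}).ncard = t.ncard - 1 := Set.ncard_diff_singleton_of_mem hv
        have := hs.2.2.2
        omega
      have hb0s : (some b0 : Option V) ∉ s := hts b0 hb0t
      have claim : ∀ (z : Option V) (hz : z ∈ ((⊤ : (splitGraph G v N1 N2).Subgraph).deleteVerts s).verts),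
          ((⊤ : (splitGraph G v N1 N2).Subgraph).deleteVerts s).coe.Reachable
            ⟨z, hz⟩ ⟨none, mem_delVerts hn⟩ := by
        intro z hz
        cases z with
        | none => exact SimpleGraph.Reachable.refl _
        | some a =>
          have ha : a ∉ t := hst a hz.2
          refine (split_reach hs hts (Or.inr hv) ⟨a, mem_delVerts ha⟩
            ⟨b0, mem_delVerts hb0t⟩ ((hconn t htcard).preconnected _ _)).trans ?_
          exact (adj_delVerts hb0s hn (splitGraph_adj_none_some hb0N).symm).reachable
      exact ⟨fun x y => (claim x.1 x.2).trans (claim y.1 y.2).symm,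
        ⟨⟨none, mem_delVerts hn⟩⟩⟩
    · -- both some v and none present: hub is some v
      have hvs : (some v : Option V) ∉ s := hts v hv
      have claim : ∀ (z : Option V) (hz : z ∈ ((⊤ : (splitGraph G v N1 N2).Subgraph).deleteVerts s).verts),
          ((⊤ : (splitGraph G v N1 N2).Subgraph).deleteVerts s).coe.Reachable
            ⟨z, hz⟩ ⟨some v, mem_delVerts hvs⟩ := by
        intro z hz
        cases z with
        | none => exact ((adj_delVerts hvs hn splitGraph_adj_v_none).reachable).symm
        | some a =>
          rcases eq_or_ne a v with rfl | hav
          · exact SimpleGraph.Reachable.refl _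
          · have ha : a ∉ t := hst a hz.2
            exact split_reach hs hts (Or.inl hn) ⟨a, mem_delVerts ha⟩
              ⟨v, mem_delVerts hv⟩ ((hconn t htcard).preconnected _ _)
      exact ⟨fun x y => (claim x.1 x.2).trans (claim y.1 y.2).symm,
        ⟨⟨some v, mem_delVerts hvs⟩⟩⟩
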